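/- Let μ > 0, n₀ > 0, let φ : [0,1] → ℝ satisfy φ_w = φ(1) ≤ φ(x) ≤ φ(0) = 0 for all x, and let f_i^in : (0,∞) → ℝ be nonnegative with w ↦ w·f_i^in(w) integrable. Assume the zero-current condition at the wall: ∫_{0}^{∞} v·f_i^in(v) dv = √(2/(πμ))·n₀·e^{φ_w}. Then the current density of the stationary sheath solutions vanishes in the whole domain: for every x ∈ [0,1], J^sh(x) = ∫_ℝ v·(f_i^sh(x,v) − f_e^sh(x,v)) dv = 0. -/

import Mathlib

open MeasureTheory Set Filter Topology

/-- Under the zero-current condition at the wall, the current density of the stationary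
sheath solutions vanishes in the whole domain:
`J^sh(x) = ∫_ℝ v·(f_i^sh(x,v) − f_e^sh(x,v)) dv = 0` for every `x ∈ [0,1]`. -/
theorem current_vanishes_everywhere
    (μ n₀ φw : ℝ) (hμ : 0 < μ) (hn₀ : 0 < n₀)
    (φ : ℝ → ℝ) (hφ0 : φ 0 = 0) (hφ1 : φ 1 = φw)
    (hφbound : ∀ x ∈ Icc (0 : ℝ) 1, φw ≤ φ x ∧ φ x ≤ 0)
    (fin : ℝ → ℝ) (hmeas : Measurable fin)
    (hnonneg : ∀ w ∈ Ioi (0 : ℝ), 0 ≤ fin w)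
    (hint : IntegrableOn (fun w => w * fin w) (Ioi (0 : ℝ)))
    (hzero : ∫ v in Ioi (0 : ℝ), v * fin v =
      Real.sqrt (2 / (Real.pi * μ)) * n₀ * Real.exp φw)
    (fish fesh : ℝ → ℝ → ℝ)
    (hfish : ∀ x v, fish x v =
      if Real.sqrt (-2 * φ x) < v then fin (Real.sqrt (v ^ 2 + 2 * φ x)) else 0)
    (hfesh : ∀ x v, fesh x v =
      if -Real.sqrt ((2 / μ) * (φ x - φw)) ≤ v then
        n₀ * Real.sqrt (2 * μ / Real.pi) * Real.exp (φ x - μ * v ^ 2 / 2) else 0) :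
    ∀ x ∈ Icc (0 : ℝ) 1, ∫ v : ℝ, v * (fish x v - fesh x v) = 0 := by
  intro x hx
  obtain ⟨hp1, hp2⟩ := hφbound x hx
  set p := φ x with hp
  set a := Real.sqrt (-2 * p) with ha
  set b := Real.sqrt ((2 / μ) * (p - φw)) with hbdef
  have ha0 : 0 ≤ a := Real.sqrt_nonneg _
  have ha2 : a ^ 2 = -2 * p := Real.sq_sqrt (by linarith)
  have hb2 : b ^ 2 = (2 / μ) * (p - φw) :=
    Real.sq_sqrt (mul_nonneg (by positivity) (by linarith))
  -- ION PART
  set G : ℝ → ℝ := fun v => v * fin (Real.sqrt (v ^ 2 + 2 * p)) with hG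
  set f : ℝ → ℝ := fun w => Real.sqrt (w ^ 2 + a ^ 2) with hf
  have hfpos : ∀ w : ℝ, 0 < w → 0 < w ^ 2 + a ^ 2 := by
    intro w hw
    have : 0 < w ^ 2 := pow_pos hw 2
    nlinarith [sq_nonneg a]
  have hderiv : ∀ w ∈ Ioi (0 : ℝ),
      HasDerivWithinAt f (w / Real.sqrt (w ^ 2 + a ^ 2)) (Ioi 0) w := by
    intro w hw
    have hpos : 0 < w ^ 2 + a ^ 2 := hfpos w hw
    have hs : 0 < Real.sqrt (w ^ 2 + a ^ 2) := Real.sqrt_pos.mpr hpos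
    have h1 : HasDerivAt (fun w : ℝ => w ^ 2 + a ^ 2) (2 * w) w := by
      simpa using (hasDerivAt_pow 2 w).add_const (a ^ 2)
    have h2 := (Real.hasDerivAt_sqrt (ne_of_gt hpos)).comp w h1
    have h3 : (1 / (2 * Real.sqrt (w ^ 2 + a ^ 2))) * (2 * w)
        = w / Real.sqrt (w ^ 2 + a ^ 2) := by
      field_simp
    rw [← h3]
    exact h2.hasDerivWithinAt
  have hinj : InjOn f (Ioi (0 : ℝ)) := by
    intro u hu v hv h
    have hu0 : (0 : ℝ) < u := hu
    have hv0 : (0 : ℝ) < v := hv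
    have h2 : u ^ 2 + a ^ 2 = v ^ 2 + a ^ 2 := by
      have := congrArg (fun t => t ^ 2) h
      simpa [hf, Real.sq_sqrt (hfpos u hu0).le, Real.sq_sqrt (hfpos v hv0).le] using this
    have h3 : u ^ 2 = v ^ 2 := by linarith
    calc u = Real.sqrt (u ^ 2) := (Real.sqrt_sq hu0.le).symm
    _ = Real.sqrt (v ^ 2) := by rw [h3]
    _ = v := Real.sqrt_sq hv0.le
  have himg : f '' Ioi 0 = Ioi a := by
    ext v
    constructor
    · rintro ⟨w, hw, rfl⟩
      have hw0 : (0 : ℝ) < w := hw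
      have h1 : a ^ 2 < w ^ 2 + a ^ 2 := by nlinarith
      have h2 := Real.sqrt_lt_sqrt (sq_nonneg a) h1
      rwa [Real.sqrt_sq ha0] at h2
    · intro hv
      have hva : a < v := hv
      have hv0 : 0 < v := lt_of_le_of_lt ha0 hva
      have hva2 : a ^ 2 < v ^ 2 := by nlinarith
      refine ⟨Real.sqrt (v ^ 2 - a ^ 2), ?_, ?_⟩
      · exact Real.sqrt_pos.mpr (by linarith)
      · show Real.sqrt (Real.sqrt (v ^ 2 - a ^ 2) ^ 2 + a ^ 2) = v
        rw [Real.sq_sqrt (by linarith), sub_add_cancel, Real.sqrt_sq hv0.le]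
  have hcomp : ∀ w ∈ Ioi (0 : ℝ),
      (fun w => w * fin w) w = |w / Real.sqrt (w ^ 2 + a ^ 2)| • G (f w) := by
    intro w hw
    have hw0 : (0 : ℝ) < w := hw
    have hpos : 0 < w ^ 2 + a ^ 2 := hfpos w hw0
    have hs : 0 < Real.sqrt (w ^ 2 + a ^ 2) := Real.sqrt_pos.mpr hpos
    have h1 : (f w) ^ 2 + 2 * p = w ^ 2 := by
      show Real.sqrt (w ^ 2 + a ^ 2) ^ 2 + 2 * p = w ^ 2
      rw [Real.sq_sqrt hpos.le]
      linarith [ha2]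
    have h2 : G (f w) = Real.sqrt (w ^ 2 + a ^ 2) * fin w := by
      show f w * fin (Real.sqrt ((f w) ^ 2 + 2 * p)) = _
      rw [h1, Real.sqrt_sq hw0.le]
    rw [h2]
    have habs : |w / Real.sqrt (w ^ 2 + a ^ 2)| = w / Real.sqrt (w ^ 2 + a ^ 2) :=
      abs_of_nonneg (div_nonneg hw0.le hs.le)
    rw [smul_eq_mul, habs]
    field_simp
  have hIon_int : IntegrableOn G (Ioi a) := by
    rw [← himg,
      integrableOn_image_iff_integrableOn_abs_deriv_smul measurableSet_Ioi hderiv hinj]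
    exact hint.congr_fun hcomp measurableSet_Ioi
  have hIon_val : ∫ v in Ioi a, G v = ∫ w in Ioi (0 : ℝ), w * fin w := by
    rw [← himg,
      integral_image_eq_integral_abs_deriv_smul measurableSet_Ioi hderiv hinj]
    exact setIntegral_congr_fun measurableSet_Ioi fun w hw => (hcomp w hw).symm
  have hgI : (fun v => v * fish x v) = (Ioi a).indicator G := by
    funext v
    rw [hfish x v, ← hp, ← ha]
    by_cases h : a < v
    · rw [if_pos h]
      simp [Set.indicator_apply, mem_Ioi, h, hG]
    · rw [if_neg h]
      simp [Set.indicator_apply, mem_Ioi, h]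
  have hgI_int : Integrable (fun v => v * fish x v) := by
    rw [hgI]
    exact (integrable_indicator_iff measurableSet_Ioi).mpr hIon_int
  have hgI_val : ∫ v, v * fish x v = Real.sqrt (2 / (Real.pi * μ)) * n₀ * Real.exp φw := by
    rw [hgI, integral_indicator measurableSet_Ioi, hIon_val, hzero]
  -- ELECTRON PART
  set c := n₀ * Real.sqrt (2 * μ / Real.pi) with hc
  have hE : (fun v => v * fesh x v)
      = (Ici (-b)).indicator
        (fun v => (c * Real.exp p) * (v * Real.exp (-(μ / 2) * v ^ 2))) := by
    funext v
    rw [hfesh x v, ← hp, ← hbdef]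
    by_cases h : -b ≤ v
    · rw [if_pos h]
      simp only [Set.indicator_apply, mem_Ici, h, if_true]
      have hexp : p - μ * v ^ 2 / 2 = p + -(μ / 2) * v ^ 2 := by ring
      rw [hexp, Real.exp_add, hc]
      ring
    · rw [if_neg h]
      simp [Set.indicator_apply, mem_Ici, h]
  have hEint0 : Integrable (fun v : ℝ => v * Real.exp (-(μ / 2) * v ^ 2)) := by
    have := integrable_mul_exp_neg_mul_sq (b := μ / 2) (by positivity)
    simpa using this
  have hF : ∀ v : ℝ, HasDerivAt (fun v => -(1 / μ) * Real.exp (-(μ / 2) * v ^ 2))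
      (v * Real.exp (-(μ / 2) * v ^ 2)) v := by
    intro v
    have h1 : HasDerivAt (fun v : ℝ => -(μ / 2) * v ^ 2) (-(μ / 2) * (2 * v)) v := by
      simpa [mul_comm] using (hasDerivAt_pow 2 v).const_mul (-(μ / 2))
    have h2 := (h1.exp).const_mul (-(1 / μ))
    refine h2.congr_deriv ?_
    linear_combination (v * Real.exp (-(μ / 2) * v ^ 2)) * (inv_mul_cancel₀ hμ.ne')
  have htend : Tendsto (fun v : ℝ => -(1 / μ) * Real.exp (-(μ / 2) * v ^ 2)) atTop (𝓝 0) := by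
    have h1 : Tendsto (fun v : ℝ => (μ / 2) * v ^ 2) atTop atTop :=
      (tendsto_pow_atTop two_ne_zero).const_mul_atTop (by positivity)
    have h2 : Tendsto (fun v : ℝ => -(μ / 2) * v ^ 2) atTop atBot := by
      simpa [neg_mul] using (tendsto_neg_atBot_iff.mpr h1)
    have h3 : Tendsto (fun v : ℝ => Real.exp (-(μ / 2) * v ^ 2)) atTop (𝓝 0) :=
      Real.tendsto_exp_atBot.comp h2
    simpa using h3.const_mul (-(1 / μ))
  have hEval : ∫ v in Ioi (-b), v * Real.exp (-(μ / 2) * v ^ 2)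
      = (1 / μ) * Real.exp (φw - p) := by
    rw [integral_Ioi_of_hasDerivAt_of_tendsto' (fun v _ => hF v) hEint0.integrableOn htend]
    have h1 : -(μ / 2) * (-b) ^ 2 = φw - p := by
      rw [neg_sq, hb2]
      field_simp
      ring
    rw [h1]
    ring
  have hgE_int : Integrable (fun v => v * fesh x v) := by
    rw [hE]
    exact ((hEint0.const_mul _).indicator measurableSet_Ici)
  have hsqrt : Real.sqrt (2 * μ / Real.pi) = μ * Real.sqrt (2 / (Real.pi * μ)) := by
    rw [show μ * Real.sqrt (2 / (Real.pi * μ))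
        = Real.sqrt (μ ^ 2) * Real.sqrt (2 / (Real.pi * μ)) by rw [Real.sqrt_sq hμ.le],
      ← Real.sqrt_mul (sq_nonneg μ)]
    congr 1
    field_simp [Real.pi_ne_zero, hμ.ne']
  have hgE_val : ∫ v, v * fesh x v = Real.sqrt (2 / (Real.pi * μ)) * n₀ * Real.exp φw := by
    rw [hE, integral_indicator measurableSet_Ici, integral_Ici_eq_integral_Ioi,
      integral_const_mul, hEval, hc, hsqrt]
    have hexp : Real.exp p * Real.exp (φw - p) = Real.exp φw := by
      rw [← Real.exp_add]
      congr 1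
      ring
    rw [← hexp]
    field_simp
  calc ∫ v, v * (fish x v - fesh x v)
      = ∫ v, (v * fish x v - v * fesh x v) := by simp only [mul_sub]
    _ = (∫ v, v * fish x v) - ∫ v, v * fesh x v := integral_sub hgI_int hgE_int
    _ = 0 := by rw [hgI_val, hgE_val]; ring
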